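/- The constant C_{p,q}, defined as the smallest C such that comass(a ∧ b) ≤ C · comass(a) · comass(b) for all p-forms a and q-forms b on ℝ^m, does not depend on m (for m ≥ p+q): the value of C valid on ℝ^(p+q) is valid on ℝ^m for all m. -/

import Mathlib

open scoped BigOperators RealInnerProductSpace

/-- Comass of a k-form on a real inner product space: the supremum of |ω(v₁,…,v_k)|
over tuples of vectors of norm at most 1. -/
noncomputable def comass {E : Type*} [NormedAddCommGroup E] [InnerProductSpace ℝ E] {k : ℕ}
    (ω : E [⋀^Fin k]→ₗ[ℝ] ℝ) : ℝ :=
  sSup {r | ∃ v : Fin k → E, (∀ i, ‖v i‖ ≤ 1) ∧ r = |ω v|}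

/-- Wedge product of real-valued alternating forms (shuffle convention, so that the
wedge of dual basis covectors evaluates as a determinant). -/
noncomputable def wedge {E : Type*} [AddCommGroup E] [Module ℝ E] {p q : ℕ}
    (a : E [⋀^Fin p]→ₗ[ℝ] ℝ) (b : E [⋀^Fin q]→ₗ[ℝ] ℝ) :
    E [⋀^Fin (p + q)]→ₗ[ℝ] ℝ :=
  (TensorProduct.lid ℝ ℝ).toLinearMap.compAlternatingMap
    ((a.domCoprod b).domDomCongr finSumFinEquiv)

/-- The standard inner product of two k-forms on Euclidean n-space, for which the
increasing wedges of standard dual basis vectors are orthonormal. -/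
noncomputable def formInner {n k : ℕ}
    (a b : (EuclideanSpace ℝ (Fin n)) [⋀^Fin k]→ₗ[ℝ] ℝ) : ℝ :=
  (1 / (k.factorial : ℝ)) *
    ∑ f : Fin k → Fin n,
      a (fun i => EuclideanSpace.single (f i) 1) * b (fun i => EuclideanSpace.single (f i) 1)

/-- The standard volume form on Euclidean n-space. -/
noncomputable def vol (n : ℕ) : (EuclideanSpace ℝ (Fin n)) [⋀^Fin n]→ₗ[ℝ] ℝ :=
  (EuclideanSpace.basisFun (Fin n) ℝ).toBasis.det

/-! ### Auxiliary lemmas -/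

lemma comass_nonneg {E : Type*} [NormedAddCommGroup E] [InnerProductSpace ℝ E] {k : ℕ}
    (ω : E [⋀^Fin k]→ₗ[ℝ] ℝ) : 0 ≤ comass ω :=
  Real.sSup_nonneg (by rintro x ⟨v, -, rfl⟩; exact abs_nonneg _)

lemma coord_abs_le_norm {n : ℕ} (x : EuclideanSpace ℝ (Fin n)) (j : Fin n) : |x j| ≤ ‖x‖ := by
  have h := abs_real_inner_le_norm (EuclideanSpace.single j (1:ℝ)) x
  rw [EuclideanSpace.inner_single_left] at h
  simpa [EuclideanSpace.norm_single] using h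

lemma comass_bddAbove {n k : ℕ} (ω : (EuclideanSpace ℝ (Fin n)) [⋀^Fin k]→ₗ[ℝ] ℝ) :
    BddAbove {r | ∃ v : Fin k → EuclideanSpace ℝ (Fin n), (∀ i, ‖v i‖ ≤ 1) ∧ r = |ω v|} := by
  classical
  refine ⟨∑ f : Fin k → Fin n, |ω (fun i => EuclideanSpace.single (f i) 1)|, ?_⟩
  rintro x ⟨v, hv, rfl⟩
  have hexp : ω v = ∑ f : Fin k → Fin n,
      (∏ i, v i (f i)) • ω (fun i => EuclideanSpace.single (f i) 1) := by
    have h1 : v = fun i => ∑ j : Fin n, v i j • EuclideanSpace.single j (1:ℝ) := by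
      funext i
      have := (EuclideanSpace.basisFun (Fin n) ℝ).sum_repr (v i)
      simpa [EuclideanSpace.basisFun_apply, EuclideanSpace.basisFun_repr] using this.symm
    calc ω v = ω (fun i => ∑ j : Fin n, v i j • EuclideanSpace.single j (1:ℝ)) := by rw [← h1]
      _ = ∑ f : Fin k → Fin n, ω (fun i => v i (f i) • EuclideanSpace.single (f i) (1:ℝ)) :=
        ω.toMultilinearMap.map_sum (fun i j => v i j • EuclideanSpace.single j (1:ℝ))
      _ = _ := by
        refine Finset.sum_congr rfl fun f _ => ?_
        exact ω.toMultilinearMap.map_smul_univ (fun i => v i (f i))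
          (fun i => EuclideanSpace.single (f i) (1:ℝ))
  rw [hexp]
  refine (Finset.abs_sum_le_sum_abs _ _).trans (Finset.sum_le_sum fun f _ => ?_)
  rw [smul_eq_mul, abs_mul]
  have h2 : |∏ i, v i (f i)| ≤ 1 := by
    rw [Finset.abs_prod]
    refine Finset.prod_le_one (fun i _ => abs_nonneg _) (fun i _ => ?_)
    exact (coord_abs_le_norm (v i) (f i)).trans (hv i)
  nlinarith [abs_nonneg (ω fun i => EuclideanSpace.single (f i) (1:ℝ)), h2,
    abs_nonneg (∏ i, v i (f i))]

lemma abs_le_comass {n k : ℕ} (ω : (EuclideanSpace ℝ (Fin n)) [⋀^Fin k]→ₗ[ℝ] ℝ)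
    {v : Fin k → EuclideanSpace ℝ (Fin n)} (hv : ∀ i, ‖v i‖ ≤ 1) : |ω v| ≤ comass ω :=
  le_csSup (comass_bddAbove ω) ⟨v, hv, rfl⟩

lemma comass_compLinearIsometry_le {n n' k : ℕ}
    (ι : EuclideanSpace ℝ (Fin n') →ₗᵢ[ℝ] EuclideanSpace ℝ (Fin n))
    (ω : (EuclideanSpace ℝ (Fin n)) [⋀^Fin k]→ₗ[ℝ] ℝ) :
    comass (ω.compLinearMap ι.toLinearMap) ≤ comass ω := by
  refine Real.sSup_le ?_ (comass_nonneg ω)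
  rintro x ⟨u, hu, rfl⟩
  rw [AlternatingMap.compLinearMap_apply]
  exact abs_le_comass ω (fun i => le_trans (le_of_eq (ι.norm_map _)) (hu i))

lemma wedge_compLinearMap {E F : Type*} [AddCommGroup E] [Module ℝ E] [AddCommGroup F]
    [Module ℝ F] {p q : ℕ} (f : F →ₗ[ℝ] E)
    (a : E [⋀^Fin p]→ₗ[ℝ] ℝ) (b : E [⋀^Fin q]→ₗ[ℝ] ℝ) :
    wedge (a.compLinearMap f) (b.compLinearMap f) = (wedge a b).compLinearMap f := by
  ext v
  simp only [wedge, LinearMap.compAlternatingMap_apply, AlternatingMap.domDomCongr_apply,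
    AlternatingMap.compLinearMap_apply]
  congr 1
  show (AlternatingMap.domCoprod _ _) (fun i => v (finSumFinEquiv i)) =
    (AlternatingMap.domCoprod a b) (fun i => f (v (finSumFinEquiv i)))
  rw [AlternatingMap.domCoprod_apply, AlternatingMap.domCoprod_apply]
  rw [MultilinearMap.sum_apply, MultilinearMap.sum_apply]
  refine Finset.sum_congr rfl fun σ _ => ?_
  induction σ using Quotient.inductionOn' with
  | h σ =>
    rw [AlternatingMap.domCoprod.summand_mk'', AlternatingMap.domCoprod.summand_mk'']
    rfl

noncomputable def extIso (n r : ℕ) :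
    EuclideanSpace ℝ (Fin n) →ₗᵢ[ℝ] EuclideanSpace ℝ (Fin (n + r)) where
  toLinearMap :=
    { toFun := fun y => (WithLp.toLp 2 (fun i : Fin (n + r) => if h : (i : ℕ) < n then y ⟨i, h⟩ else 0) :
        EuclideanSpace ℝ (Fin (n + r)))
      map_add' := by
        intro x y
        ext i
        by_cases h : (i : ℕ) < n <;> simp [h, PiLp.add_apply]
      map_smul' := by
        intro c x
        ext i
        by_cases h : (i : ℕ) < n <;> simp [h, PiLp.smul_apply] }
  norm_map' := by
    intro y
    rw [EuclideanSpace.norm_eq, EuclideanSpace.norm_eq]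
    congr 1
    rw [Fin.sum_univ_add]
    simp

noncomputable def projMap (n k : ℕ) (g : Fin k → Fin n) :
    EuclideanSpace ℝ (Fin n) →ₗ[ℝ] EuclideanSpace ℝ (Fin k) where
  toFun := fun x => (WithLp.toLp 2 (fun j => x (g j)) : EuclideanSpace ℝ (Fin k))
  map_add' := by intro x y; ext j; simp [PiLp.add_apply]
  map_smul' := by intro c x; ext j; simp [PiLp.smul_apply]

lemma vol_basis (n : ℕ) : vol n (fun j => EuclideanSpace.single j 1) = 1 := by
  have h : (fun j : Fin n => EuclideanSpace.single j (1:ℝ)) =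
      ⇑(EuclideanSpace.basisFun (Fin n) ℝ).toBasis := by
    funext j
    simp [EuclideanSpace.basisFun_apply]
  rw [vol, h, Module.Basis.det_self]

lemma projMap_eval (n k : ℕ) {g : Fin k → Fin n} (hg : Function.Injective g) (j : Fin k) :
    projMap n k g (EuclideanSpace.single (g j) 1) = EuclideanSpace.single j 1 := by
  ext i
  show (EuclideanSpace.single (g j) (1:ℝ)) (g i) = _
  simp [EuclideanSpace.single_apply, hg.eq_iff]

lemma one_le_comass_vol_proj (n k : ℕ) {g : Fin k → Fin n} (hg : Function.Injective g) :
    (1 : ℝ) ≤ comass ((vol k).compLinearMap (projMap n k g)) := by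
  refine le_csSup (comass_bddAbove _) ⟨fun j => EuclideanSpace.single (g j) 1, ?_, ?_⟩
  · intro i; simp [EuclideanSpace.norm_single]
  · rw [AlternatingMap.compLinearMap_apply]
    have h : (fun j => projMap n k g (EuclideanSpace.single (g j) 1)) =
        fun j : Fin k => EuclideanSpace.single j (1:ℝ) :=
      funext fun j => projMap_eval n k hg j
    rw [h, vol_basis]
    norm_num

/-- A comass bound comass(a∧b) ≤ C·comass(a)·comass(b) valid for all
p-forms a and q-forms b on ℝ^(p+q) remains valid on ℝ^m for every m ≥ p+q. -/
theorem wedge_comass_constant_dim_independent (p q m : ℕ) (hm : p + q ≤ m) (C : ℝ)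
    (hC : ∀ (a : (EuclideanSpace ℝ (Fin (p + q))) [⋀^Fin p]→ₗ[ℝ] ℝ)
      (b : (EuclideanSpace ℝ (Fin (p + q))) [⋀^Fin q]→ₗ[ℝ] ℝ),
      comass (wedge a b) ≤ C * comass a * comass b)
    (a : (EuclideanSpace ℝ (Fin m)) [⋀^Fin p]→ₗ[ℝ] ℝ)
    (b : (EuclideanSpace ℝ (Fin m)) [⋀^Fin q]→ₗ[ℝ] ℝ) :
    comass (wedge a b) ≤ C * comass a * comass b := by
  classical
  obtain ⟨r, rfl⟩ := Nat.exists_eq_add_of_le hm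
  -- Step 1 : C is nonnegative
  have hC0 : 0 ≤ C := by
    have hgp : Function.Injective (Fin.castAdd q : Fin p → Fin (p + q)) :=
      Fin.castAdd_injective p q
    have hgq : Function.Injective (Fin.natAdd p : Fin q → Fin (p + q)) := by
      intro i j h
      simpa [Fin.ext_iff] using h
    have hca := one_le_comass_vol_proj (p + q) p hgp
    have hcb := one_le_comass_vol_proj (p + q) q hgq
    have h := hC ((vol p).compLinearMap (projMap (p + q) p (Fin.castAdd q)))
      ((vol q).compLinearMap (projMap (p + q) q (Fin.natAdd p)))
    have h0 := comass_nonneg (wedge ((vol p).compLinearMap (projMap (p + q) p (Fin.castAdd q)))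
      ((vol q).compLinearMap (projMap (p + q) q (Fin.natAdd p))))
    set ca := comass ((vol p).compLinearMap (projMap (p + q) p (Fin.castAdd q))) with hcaeq
    set cb := comass ((vol q).compLinearMap (projMap (p + q) q (Fin.natAdd p))) with hcbeq
    by_contra hneg
    push_neg at hneg
    have hpos : 0 < ca * cb := by nlinarith
    have h1 : C * (ca * cb) < 0 := mul_neg_of_neg_of_pos hneg hpos
    have h2 : (0:ℝ) ≤ C * ca * cb := le_trans h0 h
    rw [mul_assoc] at h2
    linarith
  -- Step 2 : the sup
  refine Real.sSup_le ?_
    (mul_nonneg (mul_nonneg hC0 (comass_nonneg a)) (comass_nonneg b))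
  rintro x ⟨v, hv, rfl⟩
  set W : Submodule ℝ (EuclideanSpace ℝ (Fin (p + q + r))) :=
    Submodule.span ℝ (Set.range v) with hW
  have hd : Module.finrank ℝ W ≤ p + q := by
    simpa [Set.finrank] using finrank_range_le_card v
  set d := Module.finrank ℝ W with hdd
  set std := stdOrthonormalBasis ℝ W with hstd
  have hon : Orthonormal ℝ (Set.restrict {i : Fin (p + q + r) | (i : ℕ) < d}
      (fun i => if h : (i : ℕ) < d then (std ⟨(i : ℕ), h⟩ : EuclideanSpace ℝ (Fin (p + q + r)))
        else 0)) := by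
    have h1 : Orthonormal ℝ
        (fun j : Fin d => (std j : EuclideanSpace ℝ (Fin (p + q + r)))) :=
      std.orthonormal.comp_linearIsometry W.subtypeₗᵢ
    have h2 : Function.Injective
        (fun x : {i : Fin (p + q + r) | (i : ℕ) < d} =>
          (⟨((x : Fin (p + q + r)) : ℕ), x.2⟩ : Fin d)) := by
      rintro ⟨x, hx⟩ ⟨y, hy⟩ h
      simpa [Fin.ext_iff, Subtype.ext_iff] using congrArg (fun z : Fin d => (z : ℕ)) h
    have h3 := h1.comp _ h2
    convert h3 using 1
    funext x
    exact dif_pos x.2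
  obtain ⟨B, hB⟩ := hon.exists_orthonormalBasis_extension_of_card_eq
    (by simp [finrank_euclideanSpace])
  -- basis vectors with index ≥ p+q are orthogonal to W
  have hWspan : ∀ x ∈ W, x ∈ Submodule.span ℝ
      (Set.range (fun j : Fin d => (std j : EuclideanSpace ℝ (Fin (p + q + r))))) := by
    intro x hx
    have hs := std.sum_repr ⟨x, hx⟩
    have hxx : x = ∑ j : Fin d, std.repr ⟨x, hx⟩ j •
        (std j : EuclideanSpace ℝ (Fin (p + q + r))) := by
      have := congrArg (Submodule.subtype W) hs
      simpa using this.symm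
    rw [hxx]
    exact Submodule.sum_mem _ fun j _ =>
      Submodule.smul_mem _ _ (Submodule.subset_span (Set.mem_range_self j))
  have hperp : ∀ i : Fin (p + q + r), p + q ≤ (i : ℕ) → ∀ x ∈ W, ⟪B i, x⟫ = 0 := by
    intro i hi x hx
    refine Submodule.span_induction ?_ ?_ ?_ ?_ (hWspan x hx)
    · rintro z ⟨j, rfl⟩
      have hj : ((j : ℕ) : ℕ) < p + q + r := lt_of_lt_of_le j.2 (hd.trans (Nat.le_add_right _ _))
      have hjd : (((⟨(j : ℕ), hj⟩ : Fin (p + q + r)) : Fin (p + q + r)) : ℕ) < d := j.2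
      have hbj : B ⟨(j : ℕ), hj⟩ = (std j : EuclideanSpace ℝ (Fin (p + q + r))) := by
        have h5 := hB ⟨(j : ℕ), hj⟩ hjd
        dsimp only at h5
        rw [dif_pos hjd] at h5
        rw [h5]
      have hne : i ≠ ⟨(j : ℕ), hj⟩ := by
        intro h
        rw [h] at hi
        simp only [Fin.val_mk] at hi
        omega
      have h6 := B.orthonormal.2 hne
      dsimp only
      rw [← hbj]
      exact h6
    · simp
    · intro y z _ _ hy hz
      rw [inner_add_right, hy, hz, add_zero]
    · intro c y _ hy
      rw [real_inner_smul_right, hy, mul_zero]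
  -- the isometry and the preimages
  set ι : EuclideanSpace ℝ (Fin (p + q)) →ₗᵢ[ℝ] EuclideanSpace ℝ (Fin (p + q + r)) :=
    (B.repr.symm.toLinearIsometry).comp (extIso (p + q) r) with hι
  set w : Fin (p + q) → EuclideanSpace ℝ (Fin (p + q)) := fun i =>
    (WithLp.toLp 2 (fun j => B.repr (v i) (Fin.castAdd r j)) : EuclideanSpace ℝ (Fin (p + q))) with hw
  have hext : ∀ i, extIso (p + q) r (w i) = B.repr (v i) := by
    intro i
    ext i'
    show (if h : (i' : ℕ) < p + q then w i ⟨i', h⟩ else 0) = B.repr (v i) i'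
    split_ifs with h
    · show B.repr (v i) (Fin.castAdd r ⟨(i' : ℕ), h⟩) = B.repr (v i) i'
      rfl
    · have hvW : v i ∈ W := Submodule.subset_span (Set.mem_range_self i)
      have h7 := hperp i' (le_of_not_gt h) (v i) hvW
      rw [← B.repr_apply_apply] at h7
      exact h7.symm
  have hιw : ∀ i, ι (w i) = v i := by
    intro i
    show B.repr.symm (extIso (p + q) r (w i)) = v i
    rw [hext i]
    exact B.repr.symm_apply_apply (v i)
  have hwnorm : ∀ i, ‖w i‖ ≤ 1 := by
    intro i
    have h1 : ‖extIso (p + q) r (w i)‖ = ‖w i‖ := (extIso (p + q) r).norm_map _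
    rw [hext i] at h1
    rw [← h1, B.repr.norm_map]
    exact hv i
  -- put everything together
  have hkey : |wedge a b v| =
      |wedge (a.compLinearMap ι.toLinearMap) (b.compLinearMap ι.toLinearMap) w| := by
    rw [wedge_compLinearMap, AlternatingMap.compLinearMap_apply]
    congr 2
    funext i
    exact (hιw i).symm
  rw [hkey]
  calc |wedge (a.compLinearMap ι.toLinearMap) (b.compLinearMap ι.toLinearMap) w|
      ≤ comass (wedge (a.compLinearMap ι.toLinearMap) (b.compLinearMap ι.toLinearMap)) :=
        abs_le_comass _ hwnorm
    _ ≤ C * comass (a.compLinearMap ι.toLinearMap) * comass (b.compLinearMap ι.toLinearMap) :=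
        hC _ _
    _ ≤ C * comass a * comass b := by
        have h1 := comass_compLinearIsometry_le ι a
        have h2 := comass_compLinearIsometry_le ι b
        have h3 := comass_nonneg (a.compLinearMap ι.toLinearMap)
        have h4 := comass_nonneg (b.compLinearMap ι.toLinearMap)
        have h5 := comass_nonneg a
        calc C * comass (a.compLinearMap ι.toLinearMap) * comass (b.compLinearMap ι.toLinearMap)
            ≤ C * comass a * comass (b.compLinearMap ι.toLinearMap) :=
              mul_le_mul_of_nonneg_right (mul_le_mul_of_nonneg_left h1 hC0) h4
          _ ≤ C * comass a * comass b :=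
              mul_le_mul_of_nonneg_left h2 (mul_nonneg hC0 h5)
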